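/- Let p, k₂, q₂ be integers with p > 0, 0 < k₂ < p/2, gcd(k₂, p) = 1, and q₂ ≡ ±k₂² (mod p). Define for an integer n: f(n) = 1 if [n]_p ∈ {-k₂+1, ..., 0}, f(n) = -1 if [n]_p ∈ {1, ..., k₂}, and f(n) = 0 otherwise, where [n]_p is the representative of n mod p in (-p/2, p/2]. Suppose there exists an integer x with f(q₂ x) = -1, f(q₂ x + k₂) = 1, and f(q₂ x + 2k₂) = -1. Then p < 3k₂. -/
import Mathlib


/-- `redp p n` is `[n]_p`, the representative of `n` mod `p` in `(-p/2, p/2]`. -/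
def redp (p n : ℤ) : ℤ := (n + (p - 1) / 2) % p - (p - 1) / 2

/-- The sign function `f` of formula (1): `1` on `I_{-k₂}`, `-1` on `I_{k₂}`,
`0` otherwise. -/
def dAsign (p k₂ n : ℤ) : ℤ :=
  if -k₂ + 1 ≤ redp p n ∧ redp p n ≤ 0 then 1
  else if 1 ≤ redp p n ∧ redp p n ≤ k₂ then -1
  else 0

lemma redp_dvd (p n : ℤ) : p ∣ (redp p n - n) := by
  refine ⟨-((n + (p - 1) / 2) / p), ?_⟩
  have h := Int.emod_def (n + (p - 1) / 2) p
  unfold redp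
  rw [h]; ring

/-- if the step-`k₂` sequence takes values `-1, 1, -1` at
`q₂x, q₂x + k₂, q₂x + 2k₂`, then `p < 3k₂`. -/
theorem p_lt_three_k2 (p k₂ q₂ : ℤ) (hp : 0 < p) (hk : 0 < k₂)
    (hk2 : 2 * k₂ < p) (hcop : IsCoprime k₂ p)
    (hq₂ : q₂ ≡ k₂ ^ 2 [ZMOD p] ∨ q₂ ≡ -k₂ ^ 2 [ZMOD p])
    (x : ℤ)
    (h0 : dAsign p k₂ (q₂ * x) = -1)
    (h1 : dAsign p k₂ (q₂ * x + k₂) = 1)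
    (h2 : dAsign p k₂ (q₂ * x + 2 * k₂) = -1) :
    p < 3 * k₂ := by
  set r := redp p (q₂ * x) with hrdef
  set s := redp p (q₂ * x + k₂) with hsdef
  have hr : 1 ≤ r ∧ r ≤ k₂ := by
    unfold dAsign at h0
    split_ifs at h0 <;> first | omega | assumption
  have hs : -k₂ + 1 ≤ s ∧ s ≤ 0 := by
    unfold dAsign at h1
    split_ifs at h1 <;> first | omega | assumption
  have d1 : p ∣ (r - q₂ * x) := redp_dvd p (q₂ * x)
  have d2 : p ∣ (s - (q₂ * x + k₂)) := redp_dvd p (q₂ * x + k₂)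
  have d3 : p ∣ (r + k₂ - s) := by
    have := dvd_sub d1 d2
    have h : r - q₂ * x - (s - (q₂ * x + k₂)) = r + k₂ - s := by ring
    rwa [h] at this
  have hpos : 0 < r + k₂ - s := by omega
  have := Int.le_of_dvd hpos d3
  omega
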